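/- With f_{r,n} := (∑_q C(r+kq+n,n) q ε^{2q})/(∑_q C(r+kq+n,n) ε^{2q}) and F := ε^{2/k}, the difference f_{r,n} − f_{r,n-1} converges to F/(k(1−F)) as n → ∞, for every 0 ≤ r ≤ k-1. -/

import Mathlib

open Filter Finset Complex

noncomputable section

namespace St11

variable {k r : ℕ}

def om (k : ℕ) : ℂ := Complex.exp (2 * Real.pi * Complex.I / k)

lemma om_norm_pow (k t : ℕ) : ‖om k ^ t‖ = 1 := by
  rw [norm_pow]; simp [om, Complex.norm_exp]

lemma om_prim (hk : k ≠ 0) : IsPrimitiveRoot (om k) k := Complex.isPrimitiveRoot_exp k hk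

lemma rootsum (hk : k ≠ 0) (t : ℕ) :
    ∑ j ∈ Finset.range k, om k ^ (j * t) = if k ∣ t then (k : ℂ) else 0 := by
  have h : ∀ j, om k ^ (j * t) = (om k ^ t) ^ j := by
    intro j; rw [← pow_mul, mul_comm]
  simp only [h]
  by_cases hd : k ∣ t
  · rw [if_pos hd, ((om_prim hk).pow_eq_one_iff_dvd t).2 hd]
    simp
  · rw [if_neg hd, geom_sum_eq, ← pow_mul, mul_comm t k, pow_mul,
      (om_prim hk).pow_eq_one, one_pow, sub_self, zero_div]
    exact fun h1 => hd (((om_prim hk).pow_eq_one_iff_dvd t).1 h1)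

lemma dvd_iff (hk : 1 ≤ k) (hr : r < k) (m : ℕ) :
    k ∣ m + r * (k - 1) ↔ ∃ q, m = r + k * q := by
  have hcast : ((m + r * (k - 1) : ℕ) : ℤ) = ((m : ℤ) - r) + r * k := by
    push_cast [Nat.cast_sub hk]
    ring
  have hrk : (k : ℤ) ∣ (r : ℤ) * k := ⟨r, mul_comm _ _⟩
  have key : k ∣ m + r * (k - 1) ↔ (k : ℤ) ∣ (m : ℤ) - r := by
    rw [← Int.natCast_dvd_natCast, hcast]
    constructor
    · intro h; simpa using h.sub hrk
    · intro h; exact h.add hrk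
  rw [key]
  constructor
  · rintro ⟨c, hc⟩
    rcases le_or_gt (r : ℤ) (m : ℤ) with h | h
    · have hc0 : 0 ≤ c := by
        by_contra hcn
        push_neg at hcn
        have : (k : ℤ) * c < 0 := mul_neg_of_pos_of_neg (by exact_mod_cast hk) hcn
        omega
      obtain ⟨q, rfl⟩ := Int.eq_ofNat_of_zero_le hc0
      refine ⟨q, ?_⟩
      have : (m : ℤ) = r + k * q := by rw [← hc]; ring
      exact_mod_cast this
    · exfalso
      have h1 : (k : ℤ) ∣ (r : ℤ) - m := by
        have := (Dvd.intro c hc.symm).neg_right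
        simpa using this
      have h2 : (k : ℤ) ≤ (r : ℤ) - m := Int.le_of_dvd (by omega) h1
      have : (r : ℤ) < k := by exact_mod_cast hr
      omega
  · rintro ⟨q, rfl⟩
    exact ⟨q, by push_cast; ring⟩


def W (k r : ℕ) (y : ℝ) (n : ℕ) : ℂ :=
  ∑ j ∈ Finset.range k, om k ^ (j * (r * (k - 1))) / (1 - om k ^ j * y) ^ (n + 1)


lemma key (hk : 1 ≤ k) (hr : r < k) {y : ℝ} (hy0 : 0 < y) (hy1 : y < 1) (n : ℕ) :
    HasSum (fun q : ℕ => (k : ℂ) * ((r + k * q + n).choose n : ℂ) * (y : ℂ) ^ (r + k * q))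
      (W k r y n) := by
  have hz : ∀ j : ℕ, ‖om k ^ j * (y : ℂ)‖ < 1 := by
    intro j
    rw [norm_mul, om_norm_pow, one_mul, Complex.norm_real, Real.norm_eq_abs,
      abs_of_pos hy0]
    exact hy1
  have H : HasSum
      (fun m : ℕ => ∑ j ∈ Finset.range k,
        om k ^ (j * (r * (k - 1))) * (((m + n).choose n : ℂ) * (om k ^ j * (y : ℂ)) ^ m))
      (∑ j ∈ Finset.range k,
        om k ^ (j * (r * (k - 1))) * (1 / (1 - om k ^ j * (y : ℂ)) ^ (n + 1))) :=
    hasSum_sum fun j _ =>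
      (hasSum_choose_mul_geometric_of_norm_lt_one n (hz j)).mul_left _
  have Heq : (fun m : ℕ => ∑ j ∈ Finset.range k,
        om k ^ (j * (r * (k - 1))) * (((m + n).choose n : ℂ) * (om k ^ j * (y : ℂ)) ^ m))
      = fun m : ℕ => (if k ∣ m + r * (k - 1) then (k : ℂ) else 0) *
          ((m + n).choose n : ℂ) * (y : ℂ) ^ m := by
    funext m
    rw [← rootsum (by omega) (m + r * (k - 1)), Finset.sum_mul, Finset.sum_mul]
    refine Finset.sum_congr rfl fun j _ => ?_
    rw [mul_pow, ← pow_mul,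
      show j * (m + r * (k - 1)) = j * (r * (k - 1)) + j * m by ring, pow_add]
    ring
  rw [Heq] at H
  have HW : (∑ j ∈ Finset.range k,
        om k ^ (j * (r * (k - 1))) * (1 / (1 - om k ^ j * (y : ℂ)) ^ (n + 1))) = W k r y n := by
    unfold W
    refine Finset.sum_congr rfl fun j _ => ?_
    rw [mul_one_div]
  rw [HW] at H
  have hinj : Function.Injective (fun q : ℕ => r + k * q) := by
    intro a b hab
    simp only at hab
    exact Nat.eq_of_mul_eq_mul_left (by omega) (by omega : k * a = k * b)
  have h0 : ∀ m, m ∉ Set.range (fun q : ℕ => r + k * q) →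
      (if k ∣ m + r * (k - 1) then (k : ℂ) else 0) * ((m + n).choose n : ℂ) * (y : ℂ) ^ m = 0 := by
    intro m hm
    rw [if_neg, zero_mul, zero_mul]
    rw [dvd_iff hk hr]
    rintro ⟨q, rfl⟩
    exact hm ⟨q, rfl⟩
  have H2 := (hinj.hasSum_iff h0).2 H
  have hfin : (fun q : ℕ => (if k ∣ (r + k * q) + r * (k - 1) then (k : ℂ) else 0) *
      (((r + k * q) + n).choose n : ℂ) * (y : ℂ) ^ (r + k * q))
      = fun q : ℕ => (k : ℂ) * ((r + k * q + n).choose n : ℂ) * (y : ℂ) ^ (r + k * q) := by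
    funext q
    rw [if_pos ((dvd_iff hk hr _).2 ⟨q, rfl⟩)]
  exact hfin ▸ H2


lemma key_real (hk : 1 ≤ k) (hr : r < k) {y : ℝ} (hy0 : 0 < y) (hy1 : y < 1) (n : ℕ) :
    HasSum (fun q : ℕ => ((r + k * q + n).choose n : ℝ) * (y ^ k) ^ q)
      ((W k r y n).re / (k * y ^ r)) := by
  have H := Complex.reCLM.hasSum (key hk hr hy0 hy1 n)
  simp only [Complex.reCLM_apply] at H
  have Heq : (fun q : ℕ => ((k : ℂ) * ((r + k * q + n).choose n : ℂ) * (y : ℂ) ^ (r + k * q)).re)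
      = fun q : ℕ => (k : ℝ) * ((r + k * q + n).choose n : ℝ) * y ^ (r + k * q) := by
    funext q
    have : (k : ℂ) * ((r + k * q + n).choose n : ℂ) * (y : ℂ) ^ (r + k * q)
        = (((k : ℝ) * ((r + k * q + n).choose n : ℝ) * y ^ (r + k * q) : ℝ) : ℂ) := by
      push_cast; ring
    rw [this, Complex.ofReal_re]
  rw [Heq] at H
  have H2 := H.div_const (k * y ^ r)
  have Heq2 : (fun q : ℕ => (k : ℝ) * ((r + k * q + n).choose n : ℝ) * y ^ (r + k * q)
      / (k * y ^ r)) = fun q : ℕ => ((r + k * q + n).choose n : ℝ) * (y ^ k) ^ q := by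
    funext q
    rw [pow_add, ← pow_mul]
    have hk0 : (k : ℝ) ≠ 0 := Nat.cast_ne_zero.2 (by omega)
    have hyr : y ^ r ≠ 0 := pow_ne_zero _ (ne_of_gt hy0)
    field_simp
  rw [Heq2] at H2
  exact H2


lemma norm_one_sub_gt {y : ℝ} (hy0 : 0 < y) (hy1 : y < 1) {z : ℂ} (hz : ‖z‖ = 1)
    (hz1 : z ≠ 1) : 1 - y < ‖1 - z * y‖ := by
  have hnorm : ‖z * (y:ℂ)‖ = y := by
    rw [norm_mul, hz, one_mul, Complex.norm_real, Real.norm_eq_abs, abs_of_pos hy0]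
  have hsq : (z * (y:ℂ)).re ^ 2 + (z * (y:ℂ)).im ^ 2 = y ^ 2 := by
    have := Complex.sq_norm (z * (y:ℂ))
    rw [Complex.normSq_apply] at this
    have habs : ‖(z * (y:ℂ))‖ = y := hnorm
    rw [habs] at this
    nlinarith [this]
  have hre : (z * (y:ℂ)).re ≤ y := by
    have h1 : (z * (y:ℂ)).re ≤ |(z * (y:ℂ)).re| := le_abs_self _
    have h2 : |(z * (y:ℂ)).re| ≤ ‖(z * (y:ℂ))‖ := Complex.abs_re_le_norm _
    have h3 : ‖(z * (y:ℂ))‖ = y := hnorm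
    linarith
  rcases lt_or_eq_of_le hre with h | h
  · have hsq2 : (1 - y) ^ 2 < ‖1 - z * (y:ℂ)‖ ^ 2 := by
      rw [Complex.sq_norm,
        Complex.normSq_apply]
      simp only [Complex.sub_re, Complex.sub_im, Complex.one_re, Complex.one_im]
      nlinarith [hsq, h]
    nlinarith [norm_nonneg (1 - z * (y:ℂ)), hsq2]
  · exfalso
    have him2 : (z * (y:ℂ)).im ^ 2 = 0 := by nlinarith [hsq, h]
    have him : (z * (y:ℂ)).im = 0 := by
      exact pow_eq_zero_iff (n := 2) (by norm_num) |>.1 him2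
    have hzy : z * (y : ℂ) = (y : ℂ) := by
      apply Complex.ext
      · rw [h, Complex.ofReal_re]
      · rw [him, Complex.ofReal_im]
    have hy' : (y : ℂ) ≠ 0 := by exact_mod_cast ne_of_gt hy0
    exact hz1 (mul_right_cancel₀ hy' (by rw [hzy, one_mul]))


lemma mulre (z : ℂ) (x : ℝ) : (z * (x:ℂ)).re = z.re * x := by
  simp [Complex.mul_re]

lemma W_bound (hk : 1 ≤ k) (hr : r < k) {y : ℝ} (hy0 : 0 < y) (hy1 : y < 1) :
    ∃ ρ : ℝ, 0 ≤ ρ ∧ ρ < 1 ∧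
      ∀ n, |(W k r y n).re * (1 - y) ^ (n + 1) - 1| ≤ k * ρ ^ (n + 1) := by
  have hy1' : (0:ℝ) < 1 - y := by linarith
  have h0 : ∀ n : ℕ, om k ^ (0 * (r * (k - 1))) / (1 - om k ^ 0 * (y:ℂ)) ^ (n + 1)
      * (((1 - y) ^ (n + 1) : ℝ) : ℂ) = 1 := by
    intro n
    rw [zero_mul, pow_zero, one_mul]
    have h1 : (1 : ℂ) - (y:ℂ) = ((1 - y : ℝ) : ℂ) := by push_cast; ring
    rw [h1, div_mul_eq_mul_div, one_mul, ← Complex.ofReal_pow, div_self]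
    exact Complex.ofReal_ne_zero.2 (pow_ne_zero _ (ne_of_gt hy1'))
  have hsplit : ∀ n : ℕ, W k r y n * (((1 - y) ^ (n + 1) : ℝ) : ℂ) - 1 =
      ∑ j ∈ Finset.Ico 1 k, om k ^ (j * (r * (k - 1))) / (1 - om k ^ j * (y:ℂ)) ^ (n + 1)
        * (((1 - y) ^ (n + 1) : ℝ) : ℂ) := by
    intro n
    unfold W
    rw [Finset.range_eq_Ico, Finset.sum_eq_sum_Ico_succ_bot (show 0 < k by omega),
      add_mul, h0 n, add_sub_cancel_left, Finset.sum_mul]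
  rcases Nat.lt_or_ge k 2 with h2 | h2
  · have hk1 : k = 1 := by omega
    refine ⟨0, le_refl _, by norm_num, fun n => ?_⟩
    have h4 : W k r y n * (((1 - y) ^ (n + 1) : ℝ) : ℂ) = 1 := by
      apply sub_eq_zero.mp
      rw [hsplit n, hk1]
      simp
    rw [← mulre, h4]
    simp [zero_pow]
  · have hne : (Finset.Ico 1 k).Nonempty := ⟨1, by simp only [Finset.mem_Ico]; omega⟩
    set b : ℕ → ℝ := fun j => (1 - y) / ‖1 - om k ^ j * (y:ℂ)‖ with hb_def
    have hblt : ∀ j ∈ Finset.Ico 1 k, b j < 1 := by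
      intro j hj
      simp only [Finset.mem_Ico] at hj
      have hgt : 1 - y < ‖1 - om k ^ j * (y:ℂ)‖ :=
        norm_one_sub_gt hy0 hy1 (om_norm_pow k j)
          ((om_prim (by omega)).pow_ne_one_of_pos_of_lt (by omega) hj.2)
      rw [div_lt_one (lt_trans hy1' hgt)]
      exact hgt
    have hbnn : ∀ j, 0 ≤ b j := fun j => div_nonneg (le_of_lt hy1') (norm_nonneg _)
    set ρ : ℝ := (Finset.Ico 1 k).sup' hne b with hρ_def
    have h1mem : (1:ℕ) ∈ Finset.Ico 1 k := by simp only [Finset.mem_Ico]; omega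
    have hρ0 : 0 ≤ ρ := le_trans (hbnn 1) (Finset.le_sup' b h1mem)
    have hρ1 : ρ < 1 := (Finset.sup'_lt_iff hne).2 hblt
    refine ⟨ρ, hρ0, hρ1, fun n => ?_⟩
    set c : ℝ := (1 - y) ^ (n + 1) with hc_def
    have hcnn : 0 ≤ c := le_of_lt (pow_pos hy1' _)
    calc |(W k r y n).re * c - 1|
        = |(W k r y n * ((c : ℝ) : ℂ) - 1).re| := by rw [Complex.sub_re, mulre, Complex.one_re]
      _ ≤ ‖W k r y n * ((c : ℝ) : ℂ) - 1‖ := Complex.abs_re_le_norm _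
      _ = ‖∑ j ∈ Finset.Ico 1 k, om k ^ (j * (r * (k - 1))) /
            (1 - om k ^ j * (y:ℂ)) ^ (n + 1) * ((c : ℝ) : ℂ)‖ := by rw [hsplit n]
      _ ≤ ∑ j ∈ Finset.Ico 1 k, ‖om k ^ (j * (r * (k - 1))) /
            (1 - om k ^ j * (y:ℂ)) ^ (n + 1) * ((c : ℝ) : ℂ)‖ := norm_sum_le _ _
      _ ≤ ∑ _j ∈ Finset.Ico 1 k, ρ ^ (n + 1) := by
          refine Finset.sum_le_sum fun j hj => ?_
          rw [norm_mul, norm_div, om_norm_pow, norm_pow, Complex.norm_real,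
            Real.norm_eq_abs, _root_.abs_of_nonneg hcnn]
          have heq : (1:ℝ) / ‖1 - om k ^ j * (y:ℂ)‖ ^ (n+1) * c = b j ^ (n + 1) := by
            rw [one_div, inv_mul_eq_div, hc_def, hb_def, div_pow]
          rw [heq]
          exact pow_le_pow_left₀ (hbnn j) (Finset.le_sup' b hj) _
      _ = (Finset.Ico 1 k).card * ρ ^ (n + 1) := by rw [Finset.sum_const, nsmul_eq_mul]
      _ ≤ k * ρ ^ (n + 1) := by
          have hcard : ((Finset.Ico 1 k).card : ℝ) ≤ (k : ℝ) := by
            simp only [Nat.card_Ico]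
            exact_mod_cast Nat.sub_le _ _
          exact mul_le_mul_of_nonneg_right hcard (pow_nonneg hρ0 _)


end St11

/-- The frequency `f_{r,n} = (∑_q C(r+kq+n,n) q ε^{2q}) / (∑_q C(r+kq+n,n) ε^{2q})`. -/
def freq (k : ℕ) (ε : ℝ) (r n : ℕ) : ℝ :=
  (∑' q : ℕ, ((r + k * q + n).choose n : ℝ) * (q : ℝ) * ε ^ (2 * q)) /
    (∑' q : ℕ, ((r + k * q + n).choose n : ℝ) * ε ^ (2 * q))

open St11 in
/-- `f_{r,n} − f_{r,n−1} → F/(k(1−F))` as `n → ∞`, where `F = ε^{2/k}`. -/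
theorem statement11 (k : ℕ) (hk : 1 ≤ k) (ε : ℝ) (hε0 : 0 < ε) (hε1 : ε < 1)
    (r : ℕ) (hr : r ≤ k - 1)
    (F : ℝ) (hF : F = ε ^ ((2 : ℝ) / (k : ℝ))) :
    Tendsto (fun n : ℕ => freq k ε r (n + 1) - freq k ε r n)
      atTop (nhds (F / (k * (1 - F)))) := by
  have hrk : r < k := by omega
  have hkR : (k : ℝ) ≠ 0 := Nat.cast_ne_zero.2 (by omega)
  have hF0 : 0 < F := hF ▸ Real.rpow_pos_of_pos hε0 _
  have hF1 : F < 1 := by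
    rw [hF]
    exact Real.rpow_lt_one hε0.le hε1 (by positivity)
  have h1F : (0:ℝ) < 1 - F := by linarith
  have hFk : F ^ k = ε ^ 2 := by
    rw [hF, ← Real.rpow_natCast (ε ^ ((2:ℝ)/(k:ℝ))) k, ← Real.rpow_mul hε0.le,
      div_mul_cancel₀ _ hkR, show (2:ℝ) = ((2:ℕ):ℝ) by norm_num, Real.rpow_natCast]
  -- the partition functions
  set S : ℕ → ℝ := fun n => (W k r F n).re / (k * F ^ r) with hS_def
  have hS : ∀ n, HasSum (fun q : ℕ => ((r + k * q + n).choose n : ℝ) * ε ^ (2 * q)) (S n) :=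
    fun n => (key_real hk hrk hF0 hF1 n).congr_fun fun q => by rw [pow_mul, ← hFk]
  have hSpos : ∀ n, 0 < S n := by
    intro n
    have h1 : ((r + k * 0 + n).choose n : ℝ) * ε ^ (2 * 0) ≤ S n :=
      le_hasSum (hS n) 0 fun q _ => by positivity
    have h2 : (1:ℝ) ≤ ((r + k * 0 + n).choose n : ℝ) * ε ^ (2 * 0) := by
      simp only [Nat.mul_zero, mul_zero, pow_zero, mul_one, Nat.add_zero]
      exact_mod_cast Nat.one_le_iff_ne_zero.2 (Nat.choose_pos (Nat.le_add_left n (r + k * 0))).ne'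
    linarith
  -- the numerator sum via the recurrence
  have hnum : ∀ n, HasSum (fun q : ℕ => ((r + k * q + n).choose n : ℝ) * (q : ℝ) * ε ^ (2 * q))
      ((((n:ℝ) + 1) * S (n + 1) - ((r:ℝ) + n + 1) * S n) / k) := by
    intro n
    have h1 : HasSum (fun q : ℕ => ((n:ℝ) + 1) *
        (((r + k * q + (n+1)).choose (n+1) : ℝ) * ε ^ (2 * q))) (((n:ℝ) + 1) * S (n + 1)) :=
      (hS (n+1)).mul_left _
    have h1' : HasSum (fun q : ℕ => ((r + k * q + n + 1 : ℕ) : ℝ) *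
        (((r + k * q + n).choose n : ℝ) * ε ^ (2 * q))) (((n:ℝ) + 1) * S (n + 1)) := by
      refine h1.congr_fun fun q => ?_
      have hid : (r + k * q + n + 1) * (r + k * q + n).choose n
          = (r + k * q + n + 1).choose (n + 1) * (n + 1) := Nat.add_one_mul_choose_eq _ _
      have : ((r + k * q + n + 1 : ℕ) : ℝ) * ((r + k * q + n).choose n : ℝ)
          = ((n:ℝ) + 1) * ((r + k * q + (n+1)).choose (n+1) : ℝ) := by
        have := congrArg (fun m : ℕ => (m : ℝ)) hid
        push_cast at this ⊢
        rw [show r + k * q + (n+1) = r + k * q + n + 1 from rfl]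
        push_cast
        linarith [this]
      rw [← mul_assoc, this, mul_assoc]
    have h2 : HasSum (fun q : ℕ => ((r:ℝ) + n + 1) *
        (((r + k * q + n).choose n : ℝ) * ε ^ (2 * q))) (((r:ℝ) + n + 1) * S n) :=
      (hS n).mul_left _
    have h3 := h1'.sub h2
    have h4 := h3.div_const (k : ℝ)
    refine h4.congr_fun fun q => ?_
    have : ((r + k * q + n + 1 : ℕ) : ℝ) = (r:ℝ) + (k:ℝ) * q + n + 1 := by push_cast; ring
    rw [this]
    field_simp
    ring
  -- the formula for freq
  have hfreq : ∀ n, freq k ε r n = (((n:ℝ) + 1) * (S (n + 1) / S n) - ((r:ℝ) + n + 1)) / k := by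
    intro n
    rw [freq, (hS n).tsum_eq, (hnum n).tsum_eq]
    have h0 := (hSpos n).ne'
    field_simp
  -- u and its properties
  set u : ℕ → ℝ := fun n => (W k r F n).re * (1 - F) ^ (n + 1) with hu_def
  have hSu : ∀ n, S n = u n / ((k : ℝ) * F ^ r * (1 - F) ^ (n + 1)) := by
    intro n
    rw [hS_def, hu_def]
    have : (1 - F) ^ (n+1) ≠ 0 := pow_ne_zero _ h1F.ne'
    field_simp
  have hupos : ∀ n, 0 < u n := by
    intro n
    have := hSpos n
    rw [hSu n] at this
    have hden : 0 < (k : ℝ) * F ^ r * (1 - F) ^ (n + 1) := by positivity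
    exact (div_pos_iff.mp this).resolve_right (fun h => absurd h.2 (not_lt.2 hden.le)) |>.1
  obtain ⟨ρ, hρ0, hρ1, hρb⟩ := W_bound hk hrk hF0 hF1
  have hub : ∀ n, |u n - 1| ≤ (k:ℝ) * ρ ^ (n + 1) := fun n => hρb n
  -- limits
  have hu1 : Tendsto u atTop (nhds 1) := by
    have h0 : Tendsto (fun n : ℕ => u n - 1) atTop (nhds 0) := by
      apply squeeze_zero_norm (fun n => hub n)
      have := (tendsto_pow_atTop_nhds_zero_of_lt_one hρ0 hρ1).const_mul (k:ℝ)
      have h2 := this.comp (tendsto_add_atTop_nat 1)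
      simpa [Function.comp_def] using h2
    have := h0.add_const 1
    simpa using this
  have hdiff0 : Tendsto (fun n : ℕ => ((n:ℝ) + 1) * (u (n + 1) - u n)) atTop (nhds 0) := by
    apply squeeze_zero_norm (a := fun n : ℕ => 2 * (k:ℝ) * (((n:ℝ) + 1) * ρ ^ (n + 1)))
    · intro n
      have b1 := hub (n+1)
      have b2 := hub n
      have hρn : ρ ^ (n + 2) ≤ ρ ^ (n + 1) := pow_le_pow_of_le_one hρ0 hρ1.le (by omega)
      have habs : |u (n+1) - u n| ≤ 2 * (k:ℝ) * ρ ^ (n + 1) := by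
        have h5 : |u (n+1) - u n| ≤ |u (n+1) - 1| + |u n - 1| := by
          have heq : u (n+1) - u n = (u (n+1) - 1) - (u n - 1) := by ring
          rw [heq]
          exact abs_sub _ _
        have h6 : (k:ℝ) * ρ ^ (n + 1 + 1) ≤ (k:ℝ) * ρ ^ (n + 1) :=
          mul_le_mul_of_nonneg_left (by exact_mod_cast hρn) (by positivity)
        linarith [b1, b2]
      rw [Real.norm_eq_abs, abs_mul, _root_.abs_of_nonneg (by positivity : (0:ℝ) ≤ (n:ℝ) + 1)]
      calc ((n:ℝ) + 1) * |u (n+1) - u n| ≤ ((n:ℝ) + 1) * (2 * (k:ℝ) * ρ ^ (n + 1)) :=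
            mul_le_mul_of_nonneg_left habs (by positivity)
        _ = 2 * (k:ℝ) * (((n:ℝ) + 1) * ρ ^ (n + 1)) := by ring
    · have h1 : Tendsto (fun n : ℕ => ((n:ℝ) + 1) * ρ ^ (n + 1)) atTop (nhds 0) := by
        have h7 := (tendsto_self_mul_const_pow_of_lt_one hρ0 hρ1).comp (tendsto_add_atTop_nat 1)
        refine h7.congr fun n => ?_
        simp only [Function.comp_apply]
        push_cast
        ring
      have := h1.const_mul (2 * (k:ℝ))
      simpa using this
  set g : ℕ → ℝ := fun n => ((n:ℝ) + 1) * (u (n + 1) / u n - 1) with hg_def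
  have hg0 : Tendsto g atTop (nhds 0) := by
    have hrewrite : g = fun n : ℕ => (((n:ℝ) + 1) * (u (n + 1) - u n)) / u n := by
      funext n
      rw [hg_def]
      have := (hupos n).ne'
      field_simp
    rw [hrewrite]
    have := hdiff0.div hu1 one_ne_zero
    simpa [Pi.div_def] using this
  -- the difference formula
  have hratio : ∀ n, S (n + 1) / S n = u (n + 1) / (u n * (1 - F)) := by
    intro n
    rw [hSu n, hSu (n+1)]
    have h1 : (1 - F) ^ (n+1) ≠ 0 := pow_ne_zero _ h1F.ne'
    have h2 : (1 - F) ^ (n+2) ≠ 0 := pow_ne_zero _ h1F.ne'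
    have h3 := (hupos n).ne'
    field_simp
    ring
  have hkey : ∀ n, freq k ε r (n + 1) - freq k ε r n
      = ((1 + g (n + 1) - g n) / (1 - F) - 1) / k := by
    intro n
    rw [hfreq, hfreq, hratio, hratio, hg_def]
    have h3 := (hupos n).ne'
    have h4 := (hupos (n+1)).ne'
    have h5 := h1F.ne'
    push_cast
    field_simp
    ring
  -- final limit
  have hlim : Tendsto (fun n : ℕ => ((1 + g (n + 1) - g n) / (1 - F) - 1) / k)
      atTop (nhds (((1 + 0 - 0) / (1 - F) - 1) / k)) := by
    have hgs : Tendsto (fun n : ℕ => g (n + 1)) atTop (nhds 0) :=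
      hg0.comp (tendsto_add_atTop_nat 1)
    exact ((((tendsto_const_nhds.add hgs).sub hg0).div_const (1 - F)).sub
      tendsto_const_nhds).div_const (k:ℝ)
  have hval : ((1 + 0 - 0) / (1 - F) - 1) / (k:ℝ) = F / (k * (1 - F)) := by
    rw [show ((1:ℝ) + 0 - 0) = 1 by ring, div_sub_one h1F.ne', div_div,
      show (1:ℝ) - (1 - F) = F by ring, mul_comm (1 - F) (k:ℝ)]
  rw [← hval]
  exact hlim.congr fun n => (hkey n).symm

end
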